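/- The minimum length of a superpattern for [3]^3 is 7: there exists a word of length 7 over the alphabet {1,2,3} that is a superpattern for [3]^3 (for example 1213121), and no word of length at most 6 over {1,2,3} is a superpattern for [3]^3. -/

import Mathlib

set_option maxRecDepth 10000

def Contains {n k d : ℕ} (w : Fin n → Fin d) (p : Fin k → Fin d) : Prop :=
  ∃ f : Fin k → Fin n, StrictMono f ∧ ∀ a b : Fin k, w (f a) ≤ w (f b) ↔ p a ≤ p b

def Superpattern3 {n : ℕ} (w : Fin n → Fin 3) : Prop :=
  ∀ p : Fin 3 → Fin 3, Contains w p

def C (x y z a b c : Fin 3) : Prop :=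
  ((x ≤ y) ↔ (a ≤ b)) ∧ ((y ≤ x) ↔ (b ≤ a)) ∧ ((x ≤ z) ↔ (a ≤ c)) ∧
  ((z ≤ x) ↔ (c ≤ a)) ∧ ((y ≤ z) ↔ (b ≤ c)) ∧ ((z ≤ y) ↔ (c ≤ b))

instance (x y z a b c : Fin 3) : Decidable (C x y z a b c) := by
  unfold C; infer_instance

lemma contains_iff {n : ℕ} (w : Fin n → Fin 3) (p : Fin 3 → Fin 3) :
    Contains w p ↔ ∃ i j k : Fin n, i < j ∧ j < k ∧ C (w i) (w j) (w k) (p 0) (p 1) (p 2) := by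
  constructor
  · rintro ⟨f, hf, hp⟩
    exact ⟨f 0, f 1, f 2, hf (by decide), hf (by decide),
      hp 0 1, hp 1 0, hp 0 2, hp 2 0, hp 1 2, hp 2 1⟩
  · rintro ⟨i, j, k, hij, hjk, h1, h2, h3, h4, h5, h6⟩
    refine ⟨![i, j, k], ?_, ?_⟩
    · intro a b hab
      fin_cases a <;> fin_cases b <;>
        first
          | exact absurd hab (by decide)
          | simpa using hij
          | simpa using hjk
          | simpa using hij.trans hjk
    · intro a b
      fin_cases a <;> fin_cases b <;> simp_all
lemma super_iff {n : ℕ} (w : Fin n → Fin 3) :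
    Superpattern3 w ↔ ∀ x y z : Fin 3,
      ∃ i j k : Fin n, i < j ∧ j < k ∧ C (w i) (w j) (w k) x y z := by
  constructor
  · intro h x y z
    have := (contains_iff w ![x, y, z]).mp (h ![x, y, z])
    simpa using this
  · intro h p
    rw [contains_iff]
    exact h (p 0) (p 1) (p 2)

set_option maxHeartbeats 40000000 in
lemma key : ∀ a b c d e f : Fin 3, ∃ x y z : Fin 3,
      ¬ (C (a) (b) (c) x y z ∨
        C (a) (b) (d) x y z ∨
        C (a) (b) (e) x y z ∨
        C (a) (b) (f) x y z ∨
        C (a) (c) (d) x y z ∨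
        C (a) (c) (e) x y z ∨
        C (a) (c) (f) x y z ∨
        C (a) (d) (e) x y z ∨
        C (a) (d) (f) x y z ∨
        C (a) (e) (f) x y z ∨
        C (b) (c) (d) x y z ∨
        C (b) (c) (e) x y z ∨
        C (b) (c) (f) x y z ∨
        C (b) (d) (e) x y z ∨
        C (b) (d) (f) x y z ∨
        C (b) (e) (f) x y z ∨
        C (c) (d) (e) x y z ∨
        C (c) (d) (f) x y z ∨
        C (c) (e) (f) x y z ∨
        C (d) (e) (f) x y z) := by decide +kernel

lemma toOr (w : Fin 6 → Fin 3) (x y z : Fin 3)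
    (h : ∃ i j k : Fin 6, i < j ∧ j < k ∧ C (w i) (w j) (w k) x y z) :
    (C (w 0) (w 1) (w 2) x y z ∨
        C (w 0) (w 1) (w 3) x y z ∨
        C (w 0) (w 1) (w 4) x y z ∨
        C (w 0) (w 1) (w 5) x y z ∨
        C (w 0) (w 2) (w 3) x y z ∨
        C (w 0) (w 2) (w 4) x y z ∨
        C (w 0) (w 2) (w 5) x y z ∨
        C (w 0) (w 3) (w 4) x y z ∨
        C (w 0) (w 3) (w 5) x y z ∨
        C (w 0) (w 4) (w 5) x y z ∨
        C (w 1) (w 2) (w 3) x y z ∨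
        C (w 1) (w 2) (w 4) x y z ∨
        C (w 1) (w 2) (w 5) x y z ∨
        C (w 1) (w 3) (w 4) x y z ∨
        C (w 1) (w 3) (w 5) x y z ∨
        C (w 1) (w 4) (w 5) x y z ∨
        C (w 2) (w 3) (w 4) x y z ∨
        C (w 2) (w 3) (w 5) x y z ∨
        C (w 2) (w 4) (w 5) x y z ∨
        C (w 3) (w 4) (w 5) x y z) := by
  obtain ⟨i, j, k, hij, hjk, hc⟩ := h
  fin_cases i <;> fin_cases j <;> fin_cases k <;>
    first
      | exact absurd hij (by decide)
      | exact absurd hjk (by decide)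
      | tauto

lemma extend_super {n : ℕ} (hn : n ≤ 6) (w : Fin n → Fin 3) (h : Superpattern3 w) :
    Superpattern3 (fun i : Fin 6 => if h : i.val < n then w ⟨i.val, h⟩ else 0) := by
  intro p
  obtain ⟨f, hf, hp⟩ := h p
  refine ⟨fun a => ⟨(f a).val, lt_of_lt_of_le (f a).2 hn⟩, ?_, ?_⟩
  · intro a b hab
    exact hf hab
  · intro a b
    simpa [(f a).2, (f b).2] using hp a b

lemma no6 : ∀ w : Fin 6 → Fin 3, ¬ Superpattern3 w := by
  intro w hw
  rw [super_iff] at hw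
  obtain ⟨x, y, z, hn⟩ := key (w 0) (w 1) (w 2) (w 3) (w 4) (w 5)
  exact hn (toOr w x y z (hw x y z))

theorem minimum_superpattern_length_seven :
    Superpattern3 ![0, 1, 0, 2, 0, 1, 0] ∧
    ∀ n : ℕ, n ≤ 6 → ∀ w : Fin n → Fin 3, ¬ Superpattern3 w := by
  constructor
  · rw [super_iff]; decide
  · intro n hn w hw
    exact no6 _ (extend_super hn w hw)
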